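/- Let F₃ be the free group on three generators a, b, c, and define endomorphisms of F₃ by: d_α : a ↦ a, b ↦ ab, c ↦ ac; e_α : a ↦ a, b ↦ a⁻¹b, c ↦ a⁻¹c; d_β : a ↦ b⁻¹a, b ↦ b, c ↦ c; e_γ : a ↦ ac, b ↦ b, c ↦ c. Then for all natural numbers h and k, the composite endomorphism φ = e_α^h ∘ e_γ^k ∘ d_β^{1+k} ∘ d_α (applying d_α first) satisfies φ(b) = (b⁻¹a^{h})^{1+k} · a · (a^{−h} c)^k · a^{−h} · b. -/

import Mathlib

namespace Stmt6

/-- Generators `a = ᾱ`, `b = β̄`, `c = γ̄` of the free group `F₃`. -/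
def a : FreeGroup (Fin 3) := FreeGroup.of 0
def b : FreeGroup (Fin 3) := FreeGroup.of 1
def c : FreeGroup (Fin 3) := FreeGroup.of 2

/-- The endomorphism `d_α : a ↦ a, b ↦ ab, c ↦ ac`. -/
def dAlpha : Monoid.End (FreeGroup (Fin 3)) := FreeGroup.lift ![a, a * b, a * c]

/-- The endomorphism `e_α = d_α⁻¹ : a ↦ a, b ↦ a⁻¹b, c ↦ a⁻¹c`. -/
def eAlpha : Monoid.End (FreeGroup (Fin 3)) := FreeGroup.lift ![a, a⁻¹ * b, a⁻¹ * c]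

/-- The endomorphism `d_β : a ↦ b⁻¹a, b ↦ b, c ↦ c`. -/
def dBeta : Monoid.End (FreeGroup (Fin 3)) := FreeGroup.lift ![b⁻¹ * a, b, c]

/-- The endomorphism `e_γ = d_γ⁻¹ : a ↦ ac, b ↦ b, c ↦ c`. -/
def eGamma : Monoid.End (FreeGroup (Fin 3)) := FreeGroup.lift ![a * c, b, c]

lemma mulapp (f g : Monoid.End (FreeGroup (Fin 3))) (x : FreeGroup (Fin 3)) :
    (f * g) x = f (g x) := rfl

lemma dAlpha_b : dAlpha b = a * b := by rw [dAlpha, b]; erw [FreeGroup.lift_apply_of]; rfl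
lemma dBeta_a : dBeta a = b⁻¹ * a := by rw [dBeta, a]; erw [FreeGroup.lift_apply_of]; rfl
lemma dBeta_b : dBeta b = b := by rw [dBeta, b]; erw [FreeGroup.lift_apply_of]; rfl
lemma eGamma_a : eGamma a = a * c := by rw [eGamma, a]; erw [FreeGroup.lift_apply_of]; rfl
lemma eGamma_b : eGamma b = b := by rw [eGamma, b]; erw [FreeGroup.lift_apply_of]; rfl
lemma eGamma_c : eGamma c = c := by rw [eGamma, c]; erw [FreeGroup.lift_apply_of]; rfl
lemma eAlpha_a : eAlpha a = a := by rw [eAlpha, a]; erw [FreeGroup.lift_apply_of]; rfl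
lemma eAlpha_b : eAlpha b = a⁻¹ * b := by rw [eAlpha, b]; erw [FreeGroup.lift_apply_of]; rfl
lemma eAlpha_c : eAlpha c = a⁻¹ * c := by rw [eAlpha, c]; erw [FreeGroup.lift_apply_of]; rfl

lemma dBeta_pow_b (n : ℕ) : (dBeta ^ n) b = b := by
  induction n with
  | zero => rfl
  | succ n ih => rw [pow_succ, mulapp, dBeta_b, ih]

lemma dBeta_pow_a (n : ℕ) : (dBeta ^ n) a = b⁻¹ ^ n * a := by
  induction n with
  | zero => simp
  | succ n ih =>
      rw [pow_succ, mulapp, dBeta_a, map_mul, map_inv, dBeta_pow_b, ih, pow_succ]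
      group

lemma eGamma_pow_b (n : ℕ) : (eGamma ^ n) b = b := by
  induction n with
  | zero => rfl
  | succ n ih => rw [pow_succ, mulapp, eGamma_b, ih]

lemma eGamma_pow_c (n : ℕ) : (eGamma ^ n) c = c := by
  induction n with
  | zero => rfl
  | succ n ih => rw [pow_succ, mulapp, eGamma_c, ih]

lemma eGamma_pow_a (n : ℕ) : (eGamma ^ n) a = a * c ^ n := by
  induction n with
  | zero => simp
  | succ n ih =>
      rw [pow_succ, mulapp, eGamma_a, map_mul, ih, eGamma_pow_c, pow_succ, mul_assoc]

lemma eAlpha_pow_a (n : ℕ) : (eAlpha ^ n) a = a := by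
  induction n with
  | zero => rfl
  | succ n ih => rw [pow_succ, mulapp, eAlpha_a, ih]

lemma eAlpha_pow_b (n : ℕ) : (eAlpha ^ n) b = (a ^ n)⁻¹ * b := by
  induction n with
  | zero => simp
  | succ n ih =>
      rw [pow_succ, mulapp, eAlpha_b, map_mul, map_inv, eAlpha_pow_a, ih, pow_succ]
      group

lemma eAlpha_pow_c (n : ℕ) : (eAlpha ^ n) c = (a ^ n)⁻¹ * c := by
  induction n with
  | zero => simp
  | succ n ih =>
      rw [pow_succ, mulapp, eAlpha_c, map_mul, map_inv, eAlpha_pow_a, ih, pow_succ]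
      group

/-- For `φ = e_α^h ∘ e_γ^k ∘ d_β^{1+k} ∘ d_α` (applying `d_α` first),
`φ(b) = (b⁻¹a^{h})^{1+k} · a · (a^{−h} c)^k · a^{−h} · b`. -/
theorem stmt6 (h k : ℕ) :
    (eAlpha ^ h * eGamma ^ k * dBeta ^ (1 + k) * dAlpha) b =
      (b⁻¹ * a ^ h) ^ (1 + k) * a * ((a ^ h)⁻¹ * c) ^ k * (a ^ h)⁻¹ * b := by
  simp only [mulapp, dAlpha_b, map_mul, map_inv, map_pow, dBeta_pow_a, dBeta_pow_b,
    eGamma_pow_a, eGamma_pow_b, eGamma_pow_c, eAlpha_pow_a, eAlpha_pow_b, eAlpha_pow_c,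
    mul_inv_rev, inv_inv]
  group

end Stmt6
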